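/- Fix a prime p ≥ 3 and e = p. Let μ = (μ_1,...,μ_N) be a partition of d of the form μ_x = a_x p − 1 for x < N and μ_N = a_N p − 1 − m with a_x positive integers and 0 ≤ m < p, satisfying ν_p(a_x) ≥ ℓ_p(a_{x+1} − 1) for 1 ≤ x < N. Then deg(T^{(d)}) − deg(T^μ) = N − ⌈(N+m)/p⌉, where deg is the combinatorial degree of a standard tableau and T^ν denotes the row-reading standard ν-tableau. -/

import Mathlib

/- A partition is encoded as its list of parts `L` (weakly decreasing, positive),
with `L.getD r 0` the length of (0-indexed) row `r`.  Below, `degT e L` is the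
combinatorial degree of the row-reading standard tableau of shape `L`. -/

/-- Rows at which a node may be added to the partition `L`. -/
def addableRows (L : List ℕ) : Finset ℕ :=
  (Finset.range (L.length + 1)).filter fun r => r = 0 ∨ L.getD r 0 < L.getD (r - 1) 0

/-- Rows at which a node may be removed from the partition `L`. -/
def removableRows (L : List ℕ) : Finset ℕ :=
  (Finset.range L.length).filter fun r => L.getD (r + 1) 0 < L.getD r 0

/-- Residue `(b - a) mod e` of the addable node in row `r`. -/
def addRes (e : ℕ) (L : List ℕ) (r : ℕ) : ZMod e :=
  (L.getD r 0 : ZMod e) - (r : ZMod e)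

/-- Residue `(b - a) mod e` of the removable node in row `r`. -/
def remRes (e : ℕ) (L : List ℕ) (r : ℕ) : ZMod e :=
  (L.getD r 0 : ZMod e) - 1 - (r : ZMod e)

/-- `d_A(ν)` for the removable node `A` at the end of row `x`: addable minus
removable nodes of the same residue strictly below `A`. -/
def dACount (e : ℕ) (L : List ℕ) (x : ℕ) : ℤ :=
  (((addableRows L).filter fun r => x < r ∧ addRes e L r = remRes e L x).card : ℤ) -
  (((removableRows L).filter fun r => x < r ∧ remRes e L r = remRes e L x).card : ℤ)

/-- Remove the last node (in row-reading order) of the partition `L`. -/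
def shrink (L : List ℕ) : List ℕ :=
  if L.getLast! ≤ 1 then L.dropLast else L.dropLast ++ [L.getLast! - 1]

/-- The degree recursion for the row-reading tableau, with explicit fuel. -/
def degTAux (e : ℕ) : ℕ → List ℕ → ℤ
  | 0, _ => 0
  | _ + 1, [] => 0
  | n + 1, L => dACount e L (L.length - 1) + degTAux e n (shrink L)

/-- Degree of the row-reading standard tableau of shape `L`. -/
def degT (e : ℕ) (L : List ℕ) : ℤ := degTAux e (L.sum + L.length) L

lemma getD_concat_self (L : List ℕ) (x : ℕ) : (L ++ [x]).getD L.length 0 = x := by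
  simp [List.getD_append_right]
lemma getD_concat_gt (n : ℕ) (L : List ℕ) (x : ℕ) (h : L.length < n) :
    (L ++ [x]).getD n 0 = 0 := by apply List.getD_eq_default; simp; omega

lemma degTAux_succ (e n : ℕ) (L : List ℕ) (h : L ≠ []) :
    degTAux e (n + 1) L = dACount e L (L.length - 1) + degTAux e n (shrink L) := by
  cases L with
  | nil => simp at h
  | cons a t => rfl

lemma dACount_concat (e : ℕ) (L : List ℕ) (j : ℕ) (hj : 0 < j) :
    dACount e (L ++ [j]) L.length = if (j : ZMod e) = 0 then 1 else 0 := by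
  have hlen : (L ++ [j]).length = L.length + 1 := by simp
  have hrem : ((removableRows (L ++ [j])).filter
      fun r => L.length < r ∧ remRes e (L ++ [j]) r = remRes e (L ++ [j]) L.length) = ∅ := by
    apply Finset.filter_false_of_mem
    intro r hr
    simp only [removableRows, Finset.mem_filter, Finset.mem_range, hlen] at hr
    intro hc
    omega
  have hres : addRes e (L ++ [j]) (L.length + 1) = remRes e (L ++ [j]) L.length ↔
      (j : ZMod e) = 0 := by
    rw [addRes, remRes, getD_concat_gt _ _ _ (by omega), getD_concat_self]
    push_cast
    constructor <;> intro h <;> linear_combination -h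
  have hadd : ((addableRows (L ++ [j])).filter
      fun r => L.length < r ∧ addRes e (L ++ [j]) r = remRes e (L ++ [j]) L.length) =
      if (j : ZMod e) = 0 then {L.length + 1} else ∅ := by
    ext r
    simp only [addableRows, Finset.mem_filter, Finset.mem_range, hlen]
    constructor
    · rintro ⟨⟨hr1, _⟩, hr2, hr3⟩
      have : r = L.length + 1 := by omega
      subst this
      rw [hres.mp hr3]
      simp
    · intro hr
      split_ifs at hr with h0
      · simp only [Finset.mem_singleton] at hr
        subst hr
        refine ⟨⟨by omega, Or.inr ?_⟩, by omega, hres.mpr h0⟩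
        rw [getD_concat_gt _ _ _ (by omega)]
        simpa [getD_concat_self] using hj
      · simp at hr
  rw [dACount, hrem, hadd]
  split_ifs <;> simp

lemma getLast!_concat' (L : List ℕ) (j : ℕ) : (L ++ [j]).getLast! = j :=
  List.getLast!_of_getLast? (by simp)

lemma shrink_concat (L : List ℕ) (j : ℕ) :
    shrink (L ++ [j]) = if j ≤ 1 then L else L ++ [j - 1] := by
  simp [shrink, getLast!_concat', List.dropLast_concat]

lemma natCast_zmod_eq_zero_iff (e j : ℕ) (he : 2 ≤ e) : (j : ZMod e) = 0 ↔ e ∣ j := by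
  haveI : NeZero e := ⟨by omega⟩
  exact ZMod.natCast_eq_zero_iff j e

lemma degTAux_eq_sum (e : ℕ) (he : 2 ≤ e) :
    ∀ (n : ℕ) (L : List ℕ), (∀ x ∈ L, 0 < x) → L.sum + L.length ≤ n →
      degTAux e n L = ((L.map (fun x => x / e)).sum : ℤ) := by
  intro n
  induction n with
  | zero =>
    intro L _ hn
    have : L = [] := by
      cases L with
      | nil => rfl
      | cons a t => simp at hn
    subst this; simp [degTAux]
  | succ n ih =>
    intro L hpos hn
    rcases List.eq_nil_or_concat L with rfl | ⟨L', j, hLc⟩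
    all_goals try subst hLc
    all_goals try rw [List.concat_eq_append] at *
    · simp [degTAux]
    · have hj : 0 < j := hpos j (by simp)
      have hne : L' ++ [j] ≠ [] := by simp
      rw [degTAux_succ e n _ hne]
      have hlen : (L' ++ [j]).length - 1 = L'.length := by simp
      rw [hlen, dACount_concat e L' j hj, shrink_concat]
      have hsum : (L' ++ [j]).sum = L'.sum + j := by simp
      have hlen2 : (L' ++ [j]).length = L'.length + 1 := by simp
      by_cases h1 : j ≤ 1
      · have hj1 : j = 1 := by omega
        subst hj1
        rw [if_pos (le_refl 1)]
        rw [ih L' (fun x hx => hpos x (by simp [hx])) (by omega)]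
        have : (1 : ZMod e) ≠ 0 := by
          haveI : Fact (1 < e) := ⟨by omega⟩
          exact one_ne_zero
        rw [if_neg (by simpa using this)]
        have : 1 / e = 0 := Nat.div_eq_of_lt (by omega)
        simp [this]
      · rw [if_neg h1]
        have hj2 : 2 ≤ j := by omega
        have hpos' : ∀ x ∈ L' ++ [j - 1], 0 < x := by
          intro x hx
          rcases List.mem_append.mp hx with hx | hx
          · exact hpos x (by simp [hx])
          · simp at hx; omega
        rw [ih _ hpos' (by simp; omega)]
        have hdiv : j / e = (j - 1) / e + if e ∣ j then 1 else 0 := by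
          conv_lhs => rw [show j = (j - 1) + 1 by omega]
          rw [Nat.succ_div]
          congr 1
          simp only [show j - 1 + 1 = j by omega]
        simp only [natCast_zmod_eq_zero_iff e j he]
        simp only [List.map_append, List.sum_append, List.map_cons, List.map_nil,
          List.sum_cons, List.sum_nil, hdiv]
        push_cast
        split_ifs <;> ring

lemma degT_eq_sum (e : ℕ) (he : 2 ≤ e) (L : List ℕ) (hpos : ∀ x ∈ L, 0 < x) :
    degT e L = ((L.map (fun x => x / e)).sum : ℤ) :=
  degTAux_eq_sum e he _ L hpos le_rfl

lemma part_div (p a m : ℕ) (hp : 0 < p) (ha : 0 < a) (hm : m < p) :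
    (a * p - 1 - m) / p = a - 1 := by
  obtain ⟨k, rfl⟩ : ∃ k, a = k + 1 := ⟨a - 1, by omega⟩
  have hx : (k + 1) * p = p * k + p := by ring
  have h3 : (k + 1) * p - 1 - m = (p - 1 - m) + p * k := by omega
  rw [h3, Nat.add_mul_div_left _ _ hp, Nat.div_eq_of_lt (by omega)]
  omega

lemma key_div (p A s : ℕ) (hp : 0 < p) (hs : s ≤ p * A) :
    (p * A - s) / p + (s + p - 1) / p = A := by
  rcases Nat.eq_zero_or_pos s with rfl | hspos
  · rw [Nat.sub_zero, Nat.mul_div_cancel_left A hp,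
      Nat.div_eq_of_lt (show 0 + p - 1 < p by omega)]
    omega
  · set q := (s - 1) / p with hq
    set r := (s - 1) % p with hr
    have hqr : p * q + r = s - 1 := Nat.div_add_mod (s - 1) p
    have hrlt : r < p := Nat.mod_lt _ hp
    have hqA : q < A := by
      have h1 : p * q < p * A := by omega
      exact Nat.lt_of_mul_lt_mul_left h1
    have hx1 : p * (q + 1) = p * q + p := by ring
    have hx2 : p * (A - (q + 1)) = p * A - p * (q + 1) := Nat.mul_sub p A (q + 1)
    have hx3 : p * (q + 1) ≤ p * A := Nat.mul_le_mul_left p hqA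
    have h1 : s + p - 1 = p * (q + 1) + r := by omega
    have h2 : p * A - s = p * (A - (q + 1)) + (p - 1 - r) := by omega
    rw [h1, h2, Nat.mul_add_div hp, Nat.mul_add_div hp,
      Nat.div_eq_of_lt (by omega), Nat.div_eq_of_lt hrlt]
    omega

/-- For `e = p` a prime `≥ 3` and `μ = (a_1 p - 1, ..., a_{N-1} p - 1, a_N p - 1 - m)`
a partition of `d` with `ν_p(a_x) ≥ ℓ_p(a_{x+1} - 1)`, the difference of degrees
`deg(T^{(d)}) - deg(T^μ)` equals `N - ⌈(N+m)/p⌉`. -/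
theorem deg_difference_trivial_hook (p N m : ℕ) (hp : p.Prime) (hp3 : 3 ≤ p)
    (hN : 1 ≤ N) (hm : m < p)
    (a : Fin N → ℕ) (hapos : ∀ x, 0 < a x)
    (hval : ∀ (x : ℕ) (hx : x + 1 < N),
      sInf {i : ℕ | a ⟨x + 1, hx⟩ - 1 < p ^ i} ≤
        padicValNat p (a ⟨x, Nat.lt_of_succ_lt hx⟩))
    (L : List ℕ)
    (hL : L = List.ofFn fun x : Fin N =>
      if (x : ℕ) + 1 < N then a x * p - 1 else a x * p - 1 - m)
    (hpos : ∀ x ∈ L, 0 < x) (hsort : L.Pairwise (· ≥ ·))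
    (d : ℕ) (hd : d = L.sum) :
    degT p [d] - degT p L = (N : ℤ) - (((N + m + p - 1) / p : ℕ) : ℤ) := by
  have he : 2 ≤ p := by omega
  have hppos : 0 < p := by omega
  have hLne : L ≠ [] := by
    subst hL
    intro h
    have := congrArg List.length h
    simp at this
    omega
  have hdpos : 0 < d := by
    subst hd
    exact List.sum_pos L hpos hLne
  rw [degT_eq_sum p he [d] (by simpa using hdpos), degT_eq_sum p he L hpos]
  set A := ∑ x : Fin N, a x with hA
  -- sum of parts/p equals A - N
  have hparts : ((L.map (fun x => x / p)).sum : ℤ) = (A : ℤ) - N := by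
    rw [hL, List.map_ofFn, List.sum_ofFn]
    push_cast
    rw [show ((N : ℤ)) = ∑ _x : Fin N, (1 : ℤ) by simp, hA]
    push_cast
    rw [← Finset.sum_sub_distrib]
    apply Finset.sum_congr rfl
    intro x _
    simp only [Function.comp]
    have hkey : (if (x : ℕ) + 1 < N then a x * p - 1 else a x * p - 1 - m) / p
        = a x - 1 := by
      split_ifs with h
      · rw [show a x * p - 1 = a x * p - 1 - 0 from rfl,
          part_div p (a x) 0 hppos (hapos x) hppos]
      · exact part_div p (a x) m hppos (hapos x) hm
    rw [hkey, Nat.cast_sub (hapos x)]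
    push_cast
    ring
  -- p * A = d + N + m
  have hsum_eq : p * A = d + N + m := by
    have hterm : ∀ x : Fin N,
        ((if (x : ℕ) + 1 < N then a x * p - 1 else a x * p - 1 - m : ℕ) : ℤ)
          = (a x : ℤ) * p - 1 - (if (x : ℕ) + 1 < N then (0 : ℤ) else m) := by
      intro x
      have hge : p ≤ a x * p := Nat.le_mul_of_pos_left p (hapos x)
      have hc : ((a x * p : ℕ) : ℤ) = (a x : ℤ) * p := by push_cast; ring
      split_ifs <;> omega
    have hMsum : ∑ x : Fin N, (if (x : ℕ) + 1 < N then (0 : ℤ) else m) = m := by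
      have hNm : N - 1 < N := by omega
      have heach : ∀ x : Fin N, (if (x : ℕ) + 1 < N then (0 : ℤ) else m)
          = if x = ⟨N - 1, hNm⟩ then (m : ℤ) else 0 := by
        intro x
        have hxN : (x : ℕ) < N := x.isLt
        by_cases hxe : x = ⟨N - 1, hNm⟩
        · subst hxe
          simp only [Fin.val_mk]
          rw [if_neg (by omega)]
          simp
        · have hxv : (x : ℕ) ≠ N - 1 := by
            intro hcon
            exact hxe (Fin.ext (by simp [hcon]))
          rw [if_pos (by omega), if_neg hxe]
      rw [Finset.sum_congr rfl (fun x _ => heach x)]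
      simp
    have hcast : (d : ℤ) = p * (A : ℤ) - N - m := by
      rw [hd, hL, List.sum_ofFn, Nat.cast_sum]
      rw [Finset.sum_congr rfl (fun x _ => hterm x)]
      rw [Finset.sum_sub_distrib, Finset.sum_sub_distrib, hMsum, ← Finset.sum_mul, hA]
      push_cast
      simp [mul_comm]
    have hdnn : (0 : ℤ) ≤ (d : ℤ) := by positivity
    omega
  -- conclude
  have hkey := key_div p A (N + m) hppos (by omega)
  rw [show p * A - (N + m) = d by omega] at hkey
  rw [hparts]
  simp only [List.map_cons, List.map_nil, List.sum_cons, List.sum_nil, Nat.add_zero]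
  omega
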